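/- Let K be a number field embedded in ℂ and let (a_n) be a sequence in the ring of integers of K such that all archimedean absolute values of a_n are bounded by C^n for some C > 0. If infinitely many a_n are nonzero, then limsup_n |a_n|^{1/n} > 0, i.e., the power series Σ a_n z^n has finite radius of convergence. -/

import Mathlib

open scoped NumberField

open Filter in
/-- If `(aₙ)` is a sequence of algebraic integers in a number field `K` all of whose
archimedean absolute values are bounded by `Cⁿ`, and infinitely many `aₙ` are nonzero,
then `limsup |aₙ|^{1/n} > 0` (the series `Σ aₙ zⁿ` has finite radius of convergence). -/
theorem limsup_pos_of_algebraic_integer_coeffs (K : Type*) [Field K] [NumberField K]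
    (ι : K →+* ℂ) (a : ℕ → 𝓞 K) (C : ℝ) (hC : 0 < C)
    (hbound : ∀ n : ℕ, ∀ φ : K →+* ℂ, ‖φ (a n : K)‖ ≤ C ^ n)
    (hinf : {n : ℕ | a n ≠ 0}.Infinite) :
    0 < Filter.atTop.limsup fun n : ℕ =>
      ‖ι (a n : K)‖ ^ (1 / (n : ℝ)) := by
  classical
  -- product over all embeddings of |φ x| is at least 1 for nonzero x
  have h1 : ∀ x : 𝓞 K, x ≠ 0 → 1 ≤ ∏ φ : K →+* ℂ, ‖φ (x : K)‖ := by
    intro x hx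
    have hg : (algebraMap ℚ ℂ) (Algebra.norm ℚ (x : K)) = ∏ σ : K →ₐ[ℚ] ℂ, σ (x : K) :=
      Algebra.norm_eq_prod_embeddings ℚ ℂ (x : K)
    have habs : ‖(algebraMap ℚ ℂ) (Algebra.norm ℚ (x : K))‖
        = ∏ φ : K →+* ℂ, ‖φ (x : K)‖ := by
      rw [hg, norm_prod, ← Fintype.prod_equiv (RingHom.equivRatAlgHom K ℂ)
        (fun f : K →+* ℂ => ‖f (x : K)‖)
        (fun σ : K →ₐ[ℚ] ℂ => ‖σ (x : K)‖)
        fun _ => by simp [RingHom.equivRatAlgHom_apply]]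
    rw [← habs, ← Algebra.coe_norm_int]
    have hne : Algebra.norm ℤ x ≠ 0 := by
      intro h
      have h2 : ((Algebra.norm ℤ x : ℚ)) = 0 := by rw [h]; norm_num
      rw [Algebra.coe_norm_int] at h2
      exact (Algebra.norm_ne_zero_iff.mpr (by exact_mod_cast hx)) h2
    have h3 : (1 : ℝ) ≤ |((Algebra.norm ℤ x : ℤ) : ℝ)| := by
      rw [← Int.cast_abs]
      exact_mod_cast Int.one_le_abs hne
    calc (1 : ℝ) ≤ |((Algebra.norm ℤ x : ℤ) : ℝ)| := h3
      _ = ‖(algebraMap ℚ ℂ) ((Algebra.norm ℤ x : ℚ))‖ := by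
          rw [eq_ratCast]
          push_cast
          exact (Complex.norm_intCast _).symm
  set d := Fintype.card (K →+* ℂ) with hd
  set c : ℝ := (C ^ (d - 1))⁻¹ with hc
  have hcpos : 0 < c := by positivity
  have key : ∀ n : ℕ, 1 ≤ n → a n ≠ 0 → c ^ n ≤ ‖ι ((a n : K))‖ := by
    intro n hn hne
    have hsplit : ∏ φ : K →+* ℂ, ‖φ ((a n : K))‖
        = ‖ι ((a n : K))‖ * ∏ φ ∈ Finset.univ.erase ι, ‖φ ((a n : K))‖ :=
      (Finset.mul_prod_erase Finset.univ _ (Finset.mem_univ ι)).symm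
    have hprodle : ∏ φ ∈ Finset.univ.erase ι, ‖φ ((a n : K))‖ ≤ (C ^ n) ^ (d - 1) := by
      have := Finset.prod_le_prod (s := Finset.univ.erase ι)
        (f := fun φ : K →+* ℂ => ‖φ ((a n : K))‖) (g := fun _ => C ^ n)
        (fun φ _ => norm_nonneg _) (fun φ _ => hbound n φ)
      simpa [Finset.prod_const, Finset.card_erase_of_mem, hd] using this
    have h1n := h1 (a n) hne
    rw [hsplit] at h1n
    have hCn : (0:ℝ) < (C ^ n) ^ (d - 1) := by positivity
    have hAB : 1 ≤ ‖ι ((a n : K))‖ * (C ^ n) ^ (d - 1) :=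
      h1n.trans (mul_le_mul_of_nonneg_left hprodle (norm_nonneg _))
    have hA : 1 / (C ^ n) ^ (d - 1) ≤ ‖ι ((a n : K))‖ :=
      (div_le_iff₀ hCn).mpr hAB
    calc c ^ n = 1 / (C ^ n) ^ (d - 1) := by
          rw [hc, one_div, ← inv_pow C, ← pow_mul, ← pow_mul, ← inv_pow, Nat.mul_comm]
      _ ≤ _ := hA
  -- frequently the rpow is at least c
  have hfreq : ∃ᶠ n in atTop, c ≤ (‖ι ((a n : K))‖) ^ (1 / (n : ℝ)) := by
    rw [Nat.frequently_atTop_iff_infinite]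
    apply Set.Infinite.mono _ (hinf.diff (Set.finite_singleton 0))
    rintro n ⟨hne, hn0⟩
    have hn : 1 ≤ n := Nat.one_le_iff_ne_zero.mpr hn0
    have hk := key n hn hne
    have hnne : (n : ℝ) ≠ 0 := by exact_mod_cast hn0
    have hle : (c ^ n : ℝ) ^ (1 / (n : ℝ)) ≤ (‖ι ((a n : K))‖) ^ (1 / (n : ℝ)) :=
      Real.rpow_le_rpow (by positivity) hk (by positivity)
    calc c = (c ^ n : ℝ) ^ (1 / (n : ℝ)) := by
          rw [← Real.rpow_natCast c n, ← Real.rpow_mul hcpos.le,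
            mul_one_div, div_self hnne, Real.rpow_one]
      _ ≤ _ := hle
  have hbdd : IsBoundedUnder (· ≤ ·) atTop
      (fun n : ℕ => (‖ι ((a n : K))‖) ^ (1 / (n : ℝ))) := by
    refine isBoundedUnder_of ⟨max C 1, fun n => ?_⟩
    rcases Nat.eq_zero_or_pos n with rfl | hn
    · simp
    · have hnne : (n : ℝ) ≠ 0 := by positivity
      have hle2 : (‖ι ((a n : K))‖) ^ (1 / (n : ℝ)) ≤ ((C ^ n : ℝ)) ^ (1 / (n : ℝ)) :=
        Real.rpow_le_rpow (norm_nonneg _) (hbound n ι) (by positivity)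
      refine hle2.trans ?_
      rw [← Real.rpow_natCast C n, ← Real.rpow_mul hC.le, mul_one_div, div_self hnne,
        Real.rpow_one]
      exact le_max_left _ _
  exact lt_of_lt_of_le hcpos (le_limsup_of_frequently_le hfreq hbdd)
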